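/- Let T and B be positive integers with B dividing T, and let d_t ∈ ℕ for t ∈ {1,…,T}. For each t define m_t = {τ ∈ {1,…,t−1} : τ + d_τ ≥ t}. Then B·Σ_{s=1}^{T/B} |m_{sB+1}| ≤ Σ_{t=1}^T d_t + B·T. Consequently, for N agents with delay sequences d_t(u) and corresponding sets m_t(u), setting M_s = (1/N)·Σ_{u=1}^N |m_{sB+1}(u)| and D̄_tot = (1/N)·Σ_{t=1}^T Σ_{u=1}^N d_t(u), one has B·Σ_{s=1}^{T/B} M_s ≤ D̄_tot + B·T, and in particular B·M_s ≤ D̄_tot + B·T for every s ∈ {1,…,T/B}. -/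

import Mathlib

open Finset

/-- The set of rounds whose feedback has not yet been observed at the beginning of
round `t`, for a delay sequence `d`. -/
def missSet (d : ℕ → ℕ) (t : ℕ) : Finset ℕ :=
  (Finset.Icc 1 (t - 1)).filter fun τ => t ≤ τ + d τ

lemma per_tau (B n τ D : ℕ) (hB : 0 < B) :
    B * ((Finset.Icc 1 n).filter (fun s => τ ≤ s * B ∧ s * B + 1 ≤ τ + D)).card ≤ D + B := by
  set S := (Finset.Icc 1 n).filter (fun s => τ ≤ s * B ∧ s * B + 1 ≤ τ + D) with hS
  have hmem : ∀ s ∈ S, 1 ≤ s ∧ τ ≤ s * B ∧ s * B + 1 ≤ τ + D := by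
    intro s hs
    simp only [hS, Finset.mem_filter, Finset.mem_Icc] at hs
    exact ⟨hs.1.1, hs.2⟩
  have hdisj : ∀ x ∈ S, ∀ y ∈ S, x ≠ y →
      Disjoint (Finset.Ioc (x * B - B) (x * B)) (Finset.Ioc (y * B - B) (y * B)) := by
    intro x _ y _ hxy
    rcases lt_or_gt_of_ne hxy with h | h
    · have : x * B + B ≤ y * B := by
        have := Nat.mul_le_mul_right B h; rw [Nat.succ_mul] at this; exact this
      rw [Finset.disjoint_left]
      intro a ha ha'
      simp only [Finset.mem_Ioc] at ha ha'
      omega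
    · have : y * B + B ≤ x * B := by
        have := Nat.mul_le_mul_right B h; rw [Nat.succ_mul] at this; exact this
      rw [Finset.disjoint_left]
      intro a ha ha'
      simp only [Finset.mem_Ioc] at ha ha'
      omega
  have hcard : B * S.card = (S.biUnion (fun s => Finset.Ioc (s * B - B) (s * B))).card := by
    have hB' : ∀ s ∈ S, (Finset.Ioc (s * B - B) (s * B)).card = B := by
      intro s hs
      rw [Nat.card_Ioc]
      have h1 := (hmem s hs).1
      have : B ≤ s * B := by nlinarith
      omega
    rw [Finset.card_biUnion hdisj, Finset.sum_congr rfl hB', Finset.sum_const, smul_eq_mul,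
      mul_comm]
  have hsub : S.biUnion (fun s => Finset.Ioc (s * B - B) (s * B)) ⊆
      Finset.Ioc (τ - B) (τ + D - 1) := by
    intro a ha
    simp only [Finset.mem_biUnion, Finset.mem_Ioc] at ha ⊢
    obtain ⟨s, hs, h1, h2⟩ := ha
    obtain ⟨hs1, hs2, hs3⟩ := hmem s hs
    omega
  calc B * S.card ≤ (Finset.Ioc (τ - B) (τ + D - 1)).card := by
        rw [hcard]; exact Finset.card_le_card hsub
    _ = (τ + D - 1) - (τ - B) := Nat.card_Ioc _ _
    _ ≤ D + B := by omega

lemma key (T B : ℕ) (hB : 0 < B) (d : ℕ → ℕ) :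
    B * ∑ s ∈ Finset.Icc 1 (T / B), (missSet d (s * B + 1)).card ≤
      (∑ t ∈ Finset.Icc 1 T, d t) + B * T := by
  have step1 : ∀ s ∈ Finset.Icc 1 (T / B),
      (missSet d (s * B + 1)).card =
      ((Finset.Icc 1 T).filter (fun τ => τ ≤ s * B ∧ s * B + 1 ≤ τ + d τ)).card := by
    intro s hs
    simp only [Finset.mem_Icc] at hs
    have hsB : s * B ≤ T :=
      le_trans (Nat.mul_le_mul_right B hs.2) (Nat.div_mul_le_self T B)
    congr 1
    ext τ
    simp only [missSet, Finset.mem_filter, Finset.mem_Icc]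
    omega
  calc B * ∑ s ∈ Finset.Icc 1 (T / B), (missSet d (s * B + 1)).card
      = B * ∑ τ ∈ Finset.Icc 1 T,
          ((Finset.Icc 1 (T / B)).filter (fun s => τ ≤ s * B ∧ s * B + 1 ≤ τ + d τ)).card := by
        congr 1
        rw [Finset.sum_congr rfl step1]
        simp only [Finset.card_filter]
        exact Finset.sum_comm
    _ = ∑ τ ∈ Finset.Icc 1 T,
          B * ((Finset.Icc 1 (T / B)).filter (fun s => τ ≤ s * B ∧ s * B + 1 ≤ τ + d τ)).card :=
        Finset.mul_sum _ _ _
    _ ≤ ∑ τ ∈ Finset.Icc 1 T, (d τ + B) :=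
        Finset.sum_le_sum fun τ _ => per_tau B (T / B) τ (d τ) hB
    _ = (∑ t ∈ Finset.Icc 1 T, d t) + B * T := by
        rw [Finset.sum_add_distrib, Finset.sum_const, Nat.card_Icc, smul_eq_mul]
        congr 1
        rw [Nat.add_sub_cancel, mul_comm]

/-- delays vs. per-block missing observations. -/
theorem stmt_8 (T B N : ℕ) (hT : 0 < T) (hB : 0 < B) (hdvd : B ∣ T) (hN : 0 < N)
    (d : ℕ → Fin N → ℕ) :
    (∀ u : Fin N,
      B * ∑ s ∈ Finset.Icc 1 (T / B), (missSet (fun t => d t u) (s * B + 1)).card ≤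
        (∑ t ∈ Finset.Icc 1 T, d t u) + B * T) ∧
    ((B : ℝ) * ∑ s ∈ Finset.Icc 1 (T / B),
        ((N : ℝ)⁻¹ * ∑ u, ((missSet (fun t => d t u) (s * B + 1)).card : ℝ)) ≤
      (N : ℝ)⁻¹ * (∑ t ∈ Finset.Icc 1 T, ∑ u, (d t u : ℝ)) + B * T) ∧
    (∀ s ∈ Finset.Icc 1 (T / B),
      (B : ℝ) * ((N : ℝ)⁻¹ * ∑ u, ((missSet (fun t => d t u) (s * B + 1)).card : ℝ)) ≤
        (N : ℝ)⁻¹ * (∑ t ∈ Finset.Icc 1 T, ∑ u, (d t u : ℝ)) + B * T) := by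
  have h1 : ∀ u : Fin N,
      B * ∑ s ∈ Finset.Icc 1 (T / B), (missSet (fun t => d t u) (s * B + 1)).card ≤
        (∑ t ∈ Finset.Icc 1 T, d t u) + B * T := fun u => key T B hB (fun t => d t u)
  have hNR : (0 : ℝ) < (N : ℝ) := by exact_mod_cast hN
  have hNne : (N : ℝ) ≠ 0 := ne_of_gt hNR
  have hcast : ∀ u : Fin N,
      (B : ℝ) * ∑ s ∈ Finset.Icc 1 (T / B),
          ((missSet (fun t => d t u) (s * B + 1)).card : ℝ) ≤
        (∑ t ∈ Finset.Icc 1 T, (d t u : ℝ)) + (B : ℝ) * T := by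
    intro u
    have := h1 u
    push_cast
    exact_mod_cast this
  have h2 : (B : ℝ) * ∑ s ∈ Finset.Icc 1 (T / B),
        ((N : ℝ)⁻¹ * ∑ u, ((missSet (fun t => d t u) (s * B + 1)).card : ℝ)) ≤
      (N : ℝ)⁻¹ * (∑ t ∈ Finset.Icc 1 T, ∑ u, (d t u : ℝ)) + B * T := by
    have swap : ∑ s ∈ Finset.Icc 1 (T / B),
        ((N : ℝ)⁻¹ * ∑ u, ((missSet (fun t => d t u) (s * B + 1)).card : ℝ)) =
        (N : ℝ)⁻¹ * ∑ u, ∑ s ∈ Finset.Icc 1 (T / B),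
          ((missSet (fun t => d t u) (s * B + 1)).card : ℝ) := by
      rw [← Finset.mul_sum, Finset.sum_comm]
    rw [swap, Finset.sum_comm (s := Finset.Icc 1 T)]
    calc (B : ℝ) * ((N : ℝ)⁻¹ * ∑ u, ∑ s ∈ Finset.Icc 1 (T / B),
            ((missSet (fun t => d t u) (s * B + 1)).card : ℝ))
        = (N : ℝ)⁻¹ * ∑ u, (B : ℝ) * ∑ s ∈ Finset.Icc 1 (T / B),
            ((missSet (fun t => d t u) (s * B + 1)).card : ℝ) := by
          rw [mul_left_comm, Finset.mul_sum]
      _ ≤ (N : ℝ)⁻¹ * ∑ u, ((∑ t ∈ Finset.Icc 1 T, (d t u : ℝ)) + (B : ℝ) * T) := by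
          apply mul_le_mul_of_nonneg_left _ (by positivity)
          exact Finset.sum_le_sum fun u _ => hcast u
      _ = (N : ℝ)⁻¹ * (∑ u, ∑ t ∈ Finset.Icc 1 T, (d t u : ℝ)) + B * T := by
          rw [Finset.sum_add_distrib, Finset.sum_const, Finset.card_univ, Fintype.card_fin,
            mul_add, nsmul_eq_mul]
          congr 1
          rw [← mul_assoc, inv_mul_cancel₀ hNne, one_mul]
  refine ⟨h1, h2, ?_⟩
  intro s hs
  have hnonneg : ∀ s' ∈ Finset.Icc 1 (T / B), (0 : ℝ) ≤
      (N : ℝ)⁻¹ * ∑ u, ((missSet (fun t => d t u) (s' * B + 1)).card : ℝ) := by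
    intro s' _
    positivity
  have hle : (N : ℝ)⁻¹ * ∑ u, ((missSet (fun t => d t u) (s * B + 1)).card : ℝ) ≤
      ∑ s' ∈ Finset.Icc 1 (T / B),
        ((N : ℝ)⁻¹ * ∑ u, ((missSet (fun t => d t u) (s' * B + 1)).card : ℝ)) :=
    Finset.single_le_sum hnonneg hs
  calc (B : ℝ) * ((N : ℝ)⁻¹ * ∑ u, ((missSet (fun t => d t u) (s * B + 1)).card : ℝ))
      ≤ (B : ℝ) * ∑ s' ∈ Finset.Icc 1 (T / B),
          ((N : ℝ)⁻¹ * ∑ u, ((missSet (fun t => d t u) (s' * B + 1)).card : ℝ)) :=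
        mul_le_mul_of_nonneg_left hle (by positivity)
    _ ≤ (N : ℝ)⁻¹ * (∑ t ∈ Finset.Icc 1 T, ∑ u, (d t u : ℝ)) + B * T := h2
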